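/- arXiv:2502.18492 — 3 statements merged into one kernel-verified Lean document; each statement's English description precedes it below -/
import Mathlib

section
/- Let 𝔤 be a finite-dimensional real Lie algebra with an inner product ⟨·,·⟩, let 𝔨 be a semisimple Lie ideal of 𝔤 with orthogonal complement 𝔪 = 𝔨^⊥, and suppose the left-invariant foliation generated by 𝔨 is conformal, i.e. there is a linear functional ρ : 𝔨 → ℝ with ⟨[V,X],Y⟩ + ⟨[V,Y],X⟩ = ρ(V)·⟨X,Y⟩ for all V ∈ 𝔨 and X,Y ∈ 𝔪. If the inner product restricted to 𝔨 is biinvariant, i.e. ⟨[W,U],V⟩ + ⟨U,[W,V]⟩ = 0 for all W,U,V ∈ 𝔨, then the foliation is totally geodesic: ⟨[X,U],V⟩ + ⟨[X,V],U⟩ = 0 for all X ∈ 𝔪 and U,V ∈ 𝔨. (Theorem 1.3, stated at the level of the Lie algebra.) -/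
open LinearMap

lemma trace_sq_neg_of_skew {E : Type*} [NormedAddCommGroup E] [InnerProductSpace ℝ E]
    [FiniteDimensional ℝ E] (T : E →ₗ[ℝ] E)
    (hskew : ∀ x y : E, (inner ℝ (T x) y : ℝ) = -inner ℝ x (T y)) (hT : T ≠ 0) :
    LinearMap.trace ℝ E (T ∘ₗ T) < 0 := by
  set b := stdOrthonormalBasis ℝ E
  have htr : LinearMap.trace ℝ E (T ∘ₗ T)
      = ∑ i, (inner ℝ (b i) (T (T (b i))) : ℝ) := by
    rw [LinearMap.trace_eq_matrix_trace ℝ b.toBasis]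
    simp only [Matrix.trace, Matrix.diag, LinearMap.toMatrix_apply,
      OrthonormalBasis.coe_toBasis_repr_apply, OrthonormalBasis.repr_apply_apply,
      OrthonormalBasis.coe_toBasis, LinearMap.comp_apply]
  have hterm : ∀ i, (inner ℝ (b i) (T (T (b i))) : ℝ) = -inner ℝ (T (b i)) (T (b i)) := by
    intro i
    have := hskew (b i) (T (b i))
    linarith
  rw [htr]
  have hpos : 0 < ∑ i, (inner ℝ (T (b i)) (T (b i)) : ℝ) := by
    obtain ⟨j, hj⟩ : ∃ j, T (b j) ≠ 0 := by
      by_contra h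
      push_neg at h
      exact hT (b.toBasis.ext fun i => by simpa using h i)
    refine Finset.sum_pos' (fun i _ => real_inner_self_nonneg) ⟨j, Finset.mem_univ j, ?_⟩
    have := real_inner_self_nonneg (x := T (b j))
    rcases this.lt_or_eq with h | h
    · exact h
    · exact absurd (inner_self_eq_zero.mp h.symm) hj
  calc ∑ i, (inner ℝ (b i) (T (T (b i))) : ℝ)
      = -∑ i, (inner ℝ (T (b i)) (T (b i)) : ℝ) := by
        rw [← Finset.sum_neg_distrib]; exact Finset.sum_congr rfl fun i _ => hterm i
    _ < 0 := by linarith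



/-- **Theorem 1.3** (at the level of the Lie algebra).
Let `𝔤` be a finite-dimensional real Lie algebra with an inner product (represented
faithfully as a symmetric positive-definite bilinear form `B`), let `𝔨` be a semisimple
Lie ideal of `𝔤` with orthogonal complement `𝔪 = 𝔨ᗮ`, and suppose the left-invariant
foliation generated by `𝔨` is conformal with conformality functional `ρ`.  If the inner
product restricted to `𝔨` is biinvariant, then the foliation is totally geodesic:
`⟨[X,U],V⟩ + ⟨[X,V],U⟩ = 0` for all `X ∈ 𝔪` and `U, V ∈ 𝔨`. -/
theorem conformal_ideal_biinvariant_totally_geodesic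
    (𝔤 : Type*) [LieRing 𝔤] [LieAlgebra ℝ 𝔤] [FiniteDimensional ℝ 𝔤]
    -- the inner product ⟨·,·⟩ on 𝔤
    (B : LinearMap.BilinForm ℝ 𝔤)
    (hBsymm : ∀ x y : 𝔤, B x y = B y x)
    (hBpos : ∀ x : 𝔤, x ≠ 0 → 0 < B x x)
    -- 𝔨 is a semisimple Lie ideal of 𝔤
    (𝔨 : LieIdeal ℝ 𝔤) (hss : LieAlgebra.IsSemisimple ℝ 𝔨)
    -- the foliation generated by 𝔨 is conformal with conformality functional ρ
    (ρ : 𝔨 →ₗ[ℝ] ℝ)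
    (hconf : ∀ V : 𝔨, ∀ X Y : 𝔤,
      X ∈ (LieSubmodule.toSubmodule 𝔨).orthogonalBilin B →
      Y ∈ (LieSubmodule.toSubmodule 𝔨).orthogonalBilin B →
      B ⁅(V : 𝔤), X⁆ Y + B ⁅(V : 𝔤), Y⁆ X = ρ V * B X Y)
    -- the inner product restricted to 𝔨 is biinvariant
    (hbi : ∀ W U V : 𝔤, W ∈ 𝔨 → U ∈ 𝔨 → V ∈ 𝔨 →
      B ⁅W, U⁆ V + B U ⁅W, V⁆ = 0) :
    -- the foliation is totally geodesic
    ∀ X ∈ (LieSubmodule.toSubmodule 𝔨).orthogonalBilin B,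
      ∀ U ∈ 𝔨, ∀ V ∈ 𝔨, B ⁅X, U⁆ V + B ⁅X, V⁆ U = 0 := by
  intro X _hX U hU V hV
  -- an inner product on `𝔨` coming from `B`
  letI core : InnerProductSpace.Core ℝ ↥𝔨 :=
    { inner := fun u v => B (u : 𝔤) (v : 𝔤)
      conj_inner_symm := fun u v => by simpa using hBsymm (v : 𝔤) (u : 𝔤)
      re_inner_nonneg := fun u => by
        rcases eq_or_ne (u : 𝔤) 0 with h | h
        · simp [h]
        · exact (hBpos _ h).le
      add_left := fun u v w => by simp
      smul_left := fun u v r => by simp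
      definite := fun u hu => by
        by_contra h
        have h' : (u : 𝔤) ≠ 0 := fun h0 => h (Subtype.ext h0)
        exact absurd hu (ne_of_gt (hBpos _ h')) }
  letI : NormedAddCommGroup ↥𝔨 := core.toNormedAddCommGroup
  letI : InnerProductSpace ℝ ↥𝔨 := InnerProductSpace.ofCore core.toCore
  have hinner : ∀ u v : ↥𝔨, (inner ℝ u v : ℝ) = B (u : 𝔤) (v : 𝔤) := fun _ _ => rfl
  -- the adjoint action of elements of `𝔨` on `𝔨` is skew
  have hskew : ∀ w u v : ↥𝔨, (inner ℝ (⁅w, u⁆ : ↥𝔨) v : ℝ) = -inner ℝ u (⁅w, v⁆ : ↥𝔨) := by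
    intro w u v
    have h := hbi (w : 𝔤) (u : 𝔤) (v : 𝔤) w.2 u.2 v.2
    show B ⁅(w : 𝔤), (u : 𝔤)⁆ (v : 𝔤) = -(B (u : 𝔤) ⁅(w : 𝔤), (v : 𝔤)⁆)
    linarith
  -- `𝔨` has nondegenerate Killing form
  haveI : LieAlgebra.IsKilling ℝ ↥𝔨 := by
    constructor
    rw [eq_bot_iff]
    intro u hu
    rw [LieIdeal.mem_killingCompl] at hu
    have h0 : killingForm ℝ ↥𝔨 u u = 0 := hu u trivial
    rw [LieSubmodule.mem_bot]
    by_contra h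
    have had : LieAlgebra.ad ℝ ↥𝔨 u ≠ 0 := by
      intro had
      apply h
      have : u ∈ LieAlgebra.center ℝ ↥𝔨 := by
        intro x
        have hx : ⁅u, x⁆ = 0 := by
          have h5 := congrArg (fun f => ((f : Module.End ℝ ↥𝔨) x)) had
          simpa using h5
        rw [← lie_skew, hx, neg_zero]
      rwa [LieAlgebra.center_eq_bot, LieSubmodule.mem_bot] at this
    have hlt := trace_sq_neg_of_skew (LieAlgebra.ad ℝ ↥𝔨 u)
      (fun x y => hskew u x y) had
    rw [← killingForm_apply_apply] at hlt
    exact absurd h0 (ne_of_lt hlt)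
  -- the adjoint action of `X` on `𝔨` is a derivation of `𝔨`
  let D : LieDerivation ℝ ↥𝔨 ↥𝔨 :=
    { toFun := fun u => ⟨⁅X, (u : 𝔤)⁆, 𝔨.lie_mem u.2⟩
      map_add' := fun u v => by ext; simp
      map_smul' := fun r u => by ext; simp
      leibniz' := fun a b => by
        apply Subtype.ext
        show ⁅X, ⁅(a : 𝔤), (b : 𝔤)⁆⁆
          = ⁅(a : 𝔤), ⁅X, (b : 𝔤)⁆⁆ - ⁅(b : 𝔤), ⁅X, (a : 𝔤)⁆⁆
        rw [leibniz_lie, ← lie_skew (b : 𝔤) ⁅X, (a : 𝔤)⁆]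
        abel }
  obtain ⟨Z, hZ⟩ := LieDerivation.IsKilling.exists_eq_ad D
  have hZ' : ∀ u : ↥𝔨, ⁅(Z : 𝔤), (u : 𝔤)⁆ = ⁅X, (u : 𝔤)⁆ := by
    intro u
    have := congrArg (fun f => ((f u : ↥𝔨) : 𝔤)) hZ
    simpa [LieIdeal.coe_bracket_of_module, D] using this
  have h1 := hbi (Z : 𝔤) U V Z.2 hU hV
  have e1 : B ⁅X, U⁆ V = B ⁅(Z : 𝔤), U⁆ V := by rw [hZ' ⟨U, hU⟩]
  have e2 : B ⁅X, V⁆ U = B ⁅(Z : 𝔤), V⁆ U := by rw [hZ' ⟨V, hV⟩]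
  rw [e1, e2, hBsymm ⁅(Z : 𝔤), V⁆ U]
  linarith
end

section
/- Let 𝔤 be a finite-dimensional real Lie algebra with an inner product ⟨·,·⟩ and let 𝔨 be a semisimple Lie ideal of 𝔤. Let B denote the Killing form of 𝔨 and let θ : 𝔨 → 𝔨 be an involutive Lie algebra automorphism of 𝔨 such that (V,W) ↦ −B(V,θ(W)) is positive definite (a Cartan involution). Suppose the inner product of 𝔤 restricted to 𝔨 equals the Cartan–Killing metric, i.e. ⟨V,W⟩ = −B(V,θ(W)) for all V,W ∈ 𝔨. Then for every X ∈ 𝔤 and every V ∈ 𝔨 with θ(V) = V or θ(V) = −V one has ⟨[X,V],V⟩ = 0; in particular, for every X ∈ 𝔨^⊥ the trace of ad_X restricted to 𝔨 vanishes, so the foliation generated by 𝔨 is minimal. (Proposition 5.1, stated at the level of the Lie algebra.) -/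
/-- **Proposition 5.1** (at the level of the Lie algebra).
Let `𝔤` be a finite-dimensional real Lie algebra with an inner product (represented
faithfully as a symmetric positive-definite bilinear form `B𝔤`) and let `𝔨` be a
semisimple Lie ideal of `𝔤`.  Let `B` be the Killing form of `𝔨` and `θ` a Cartan
involution of `𝔨`, i.e. an involutive Lie algebra automorphism such that
`(V,W) ↦ -B(V,θ(W))` is positive definite.  If the inner product of `𝔤` restricted to
`𝔨` equals the Cartan--Killing metric `(V,W) ↦ -B(V,θ(W))`, then for every `X ∈ 𝔤` and
every `V ∈ 𝔨` with `θ(V) = V` or `θ(V) = -V` one has `⟨[X,V],V⟩ = 0`; in particular,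
for every `X ∈ 𝔨ᗮ` the trace of `ad_X` restricted to `𝔨` vanishes, so the foliation
generated by `𝔨` is minimal. -/
theorem cartan_killing_metric_minimal
    (𝔤 : Type*) [LieRing 𝔤] [LieAlgebra ℝ 𝔤] [FiniteDimensional ℝ 𝔤]
    -- the inner product ⟨·,·⟩ on 𝔤
    (B𝔤 : LinearMap.BilinForm ℝ 𝔤)
    (hBsymm : ∀ x y : 𝔤, B𝔤 x y = B𝔤 y x)
    (hBpos : ∀ x : 𝔤, x ≠ 0 → 0 < B𝔤 x x)
    -- 𝔨 is a semisimple Lie ideal of 𝔤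
    (𝔨 : LieIdeal ℝ 𝔤) (hss : LieAlgebra.IsSemisimple ℝ 𝔨)
    -- θ is a Cartan involution of 𝔨
    (θ : 𝔨 ≃ₗ⁅ℝ⁆ 𝔨)
    (hinv : ∀ V : 𝔨, θ (θ V) = V)
    (hposdef : ∀ V : 𝔨, V ≠ 0 → 0 < -(killingForm ℝ 𝔨 V (θ V)))
    -- the inner product restricted to 𝔨 is the Cartan--Killing metric
    (hCK : ∀ V W : 𝔨, B𝔤 (V : 𝔤) (W : 𝔤) = -(killingForm ℝ 𝔨 V (θ W))) :
    -- ⟨[X,V],V⟩ = 0 whenever θ(V) = ±V ...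
    (∀ X : 𝔤, ∀ V : 𝔨, (θ V = V ∨ θ V = -V) → B𝔤 ⁅X, (V : 𝔤)⁆ (V : 𝔤) = 0) ∧
    -- ... and in particular the foliation generated by 𝔨 is minimal
    (∀ X ∈ (LieSubmodule.toSubmodule 𝔨).orthogonalBilin B𝔤,
      LinearMap.trace ℝ ↥(LieSubmodule.toSubmodule 𝔨)
        ((LieAlgebra.ad ℝ 𝔤 X).restrict
          (p := LieSubmodule.toSubmodule 𝔨) (q := LieSubmodule.toSubmodule 𝔨)
          (fun _ hv => 𝔨.lie_mem hv)) = 0) := by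
  -- The Killing form of 𝔨 is nondegenerate
  haveI hK : LieAlgebra.IsKilling ℝ 𝔨 := by
    constructor
    rw [eq_bot_iff]
    intro x hx
    rw [LieIdeal.mem_killingCompl] at hx
    by_contra hx0
    have h1 := hposdef x (by simpa using hx0)
    have h2 : killingForm ℝ 𝔨 x (θ x) = 0 := by
      rw [LieModule.traceForm_comm]
      exact hx (θ x) trivial
    rw [h2] at h1
    simp at h1
  -- For each X : 𝔤, ad X restricts to a derivation of 𝔨, which is inner
  have key : ∀ X : 𝔤, ∃ y : 𝔨,
      ∀ V : 𝔨, ((LieAlgebra.ad ℝ 𝔤 X).restrict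
          (p := LieSubmodule.toSubmodule 𝔨) (q := LieSubmodule.toSubmodule 𝔨)
          (fun _ hv => 𝔨.lie_mem hv)) V = ⁅y, V⁆ := by
    intro X
    set D : LieDerivation ℝ 𝔨 𝔨 :=
      { toLinearMap := ((LieAlgebra.ad ℝ 𝔤 X).restrict
          (p := LieSubmodule.toSubmodule 𝔨) (q := LieSubmodule.toSubmodule 𝔨)
          (fun _ hv => 𝔨.lie_mem hv))
        leibniz' := by
          intro a b
          apply Subtype.ext
          show ⁅X, (⁅a, b⁆ : 𝔨).1⁆ = _
          have : (⁅a, b⁆ : 𝔨).1 = ⁅a.1, b.1⁆ := rfl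
          rw [this]
          show ⁅X, ⁅a.1, b.1⁆⁆ =
            (⁅a, (⟨⁅X, b.1⁆, 𝔨.lie_mem b.2⟩ : 𝔨)⁆ - ⁅b, (⟨⁅X, a.1⁆, 𝔨.lie_mem a.2⟩ : 𝔨)⁆ : 𝔨).1
          show ⁅X, ⁅a.1, b.1⁆⁆ = ⁅a.1, ⁅X, b.1⁆⁆ - ⁅b.1, ⁅X, a.1⁆⁆
          rw [leibniz_lie]
          rw [← lie_skew b.1 ⁅X, a.1⁆]
          abel } with hD
    obtain ⟨y, hy⟩ := LieDerivation.IsKilling.exists_eq_ad D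
    refine ⟨y, fun V => ?_⟩
    have : D V = ⁅y, V⁆ := by
      rw [← hy]
      simp
    exact this
  constructor
  · -- first part
    intro X V hV
    obtain ⟨y, hy⟩ := key X
    have hmem : ⁅X, (V : 𝔤)⁆ ∈ 𝔨 := 𝔨.lie_mem V.2
    have hW : (⟨⁅X, (V : 𝔤)⁆, hmem⟩ : 𝔨) = ⁅y, V⁆ := hy V
    have : B𝔤 ⁅X, (V : 𝔤)⁆ (V : 𝔤) = -(killingForm ℝ 𝔨 ⁅y, V⁆ (θ V)) := by
      rw [← hW]
      exact hCK ⟨⁅X, (V : 𝔤)⁆, hmem⟩ V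
    rw [this]
    have hz : ∀ W : 𝔨, killingForm ℝ 𝔨 ⁅y, V⁆ W =
        killingForm ℝ 𝔨 y ⁅V, W⁆ := fun W =>
      LieModule.traceForm_apply_lie_apply ℝ 𝔨 𝔨 y V W
    rcases hV with h | h
    · rw [h, hz V]
      simp
    · rw [h]
      rw [map_neg, hz V]
      simp
  · -- second part: the trace vanishes (for every X, in fact)
    intro X _
    obtain ⟨y, hy⟩ := key X
    have hDad : ((LieAlgebra.ad ℝ 𝔤 X).restrict
          (p := LieSubmodule.toSubmodule 𝔨) (q := LieSubmodule.toSubmodule 𝔨)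
          (fun _ hv => 𝔨.lie_mem hv)) = LieAlgebra.ad ℝ 𝔨 y := by
      ext V
      rw [hy V]
      rfl
    rw [hDad]
    -- 𝔨 is perfect, so y is in the derived algebra and trace of ad y vanishes
    have hperf : (⁅(⊤ : LieIdeal ℝ 𝔨), (⊤ : LieIdeal ℝ 𝔨)⁆ : LieIdeal ℝ 𝔨) = ⊤ := by
      set J : LieIdeal ℝ 𝔨 := ⁅(⊤ : LieIdeal ℝ 𝔨), (⊤ : LieIdeal ℝ 𝔨)⁆ with hJ
      have hC : IsLieAbelian (Jᶜ : LieIdeal ℝ 𝔨) := by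
        rw [LieSubmodule.lie_abelian_iff_lie_self_eq_bot]
        have h1 : (⁅Jᶜ, Jᶜ⁆ : LieIdeal ℝ 𝔨) ≤ J :=
          LieSubmodule.mono_lie le_top le_top
        have h2 : (⁅Jᶜ, Jᶜ⁆ : LieIdeal ℝ 𝔨) ≤ Jᶜ := LieSubmodule.lie_le_right _ _
        have := le_inf h1 h2
        rwa [inf_compl_eq_bot, le_bot_iff] at this
      have hCbot : (Jᶜ : LieIdeal ℝ 𝔨) = ⊥ :=
        (LieAlgebra.hasTrivialRadical_iff_no_abelian_ideals ℝ 𝔨).mp inferInstance Jᶜ hC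
      rwa [compl_eq_bot] at hCbot
    have hmem : y ∈ LieModule.lowerCentralSeries ℝ (↥𝔨) (↥𝔨) 1 := by
      have : LieModule.lowerCentralSeries ℝ (↥𝔨) (↥𝔨) 1 = ⁅(⊤ : LieIdeal ℝ 𝔨), (⊤ : LieIdeal ℝ 𝔨)⁆ := by
        simp [LieModule.lowerCentralSeries_succ]
      rw [this, hperf]
      trivial
    have := LieModule.trace_toEnd_eq_zero_of_mem_lcs (R := ℝ) (L := 𝔨) (M := 𝔨)
      (k := 1) (x := y) le_rfl hmem
    exact this
end

section
/- Let 𝔤 be a finite-dimensional real Lie algebra with an inner product ⟨·,·⟩ and let 𝔨 be a semisimple Lie subalgebra of 𝔤 whose orthogonal complement 𝔪 = 𝔨^⊥ has dimension 3. Suppose there is a linear functional ρ : 𝔨 → ℝ with ⟨[V,X],Y⟩ + ⟨[V,Y],X⟩ = ρ(V)·⟨X,Y⟩ for all V ∈ 𝔨 and X,Y ∈ 𝔪 (the foliation generated by 𝔨 is conformal). If 𝔤 is not perfect, i.e. [𝔤,𝔤] ≠ 𝔤, then 𝔨 is a Lie ideal of 𝔤, i.e. [𝔤,𝔨] ⊆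 𝔨. (Proposition 6.2, stated at the level of the Lie algebra.) -/
theorem aux_semisimple_perfect {R L : Type*} [CommRing R] [LieRing L] [LieAlgebra R L]
    [LieAlgebra.IsSemisimple R L] :
    ⁅(⊤ : LieIdeal R L), (⊤ : LieIdeal R L)⁆ = ⊤ := by
  refine top_unique ?_
  conv_lhs => rw [← LieAlgebra.IsSemisimple.sSup_atoms_eq_top (R := R) (L := L)]
  apply sSup_le
  intro J hJ
  have hsimple := LieAlgebra.IsSemisimple.isSimple_of_isAtom J hJ
  have hle : ⁅J, J⁆ ≤ J := LieSubmodule.lie_le_right J J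
  have hJJ : ⁅J, J⁆ = J := by
    rcases hle.lt_or_eq with h | h
    · exfalso
      have habel : IsLieAbelian J := by
        rw [LieAlgebra.abelian_iff_derived_one_eq_bot]
        simpa using hJ.2 _ h
      exact hsimple.non_abelian habel
    · exact h
  calc J = ⁅J, J⁆ := hJJ.symm
    _ ≤ ⁅(⊤ : LieIdeal R L), (⊤ : LieIdeal R L)⁆ := LieSubmodule.mono_lie le_top le_top



/-- **Proposition 6.2** (at the level of the Lie algebra).
Let `𝔤` be a finite-dimensional real Lie algebra with an inner product (represented
faithfully as a symmetric positive-definite bilinear form `B`) and let `𝔨` be a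
semisimple Lie subalgebra of `𝔤` whose orthogonal complement `𝔪 = 𝔨ᗮ` has dimension
three.  Suppose the foliation generated by `𝔨` is conformal with conformality
functional `ρ`.  If `𝔤` is not perfect, i.e. `[𝔤,𝔤] ≠ 𝔤`, then `𝔨` is a Lie ideal of
`𝔤`, i.e. `[𝔤,𝔨] ⊆ 𝔨`. -/
theorem codim_three_not_perfect_implies_normal
    (𝔤 : Type*) [LieRing 𝔤] [LieAlgebra ℝ 𝔤] [FiniteDimensional ℝ 𝔤]
    -- the inner product ⟨·,·⟩ on 𝔤
    (B : LinearMap.BilinForm ℝ 𝔤)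
    (hBsymm : ∀ x y : 𝔤, B x y = B y x)
    (hBpos : ∀ x : 𝔤, x ≠ 0 → 0 < B x x)
    -- 𝔨 is a semisimple Lie subalgebra of 𝔤
    (𝔨 : LieSubalgebra ℝ 𝔤) (hss : LieAlgebra.IsSemisimple ℝ 𝔨)
    -- the orthogonal complement 𝔪 = 𝔨ᗮ has dimension 3
    (hcodim : Module.finrank ℝ ↥((LieSubalgebra.toSubmodule 𝔨).orthogonalBilin B) = 3)
    -- the foliation generated by 𝔨 is conformal with conformality functional ρ
    (ρ : 𝔨 →ₗ[ℝ] ℝ)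
    (hconf : ∀ V : 𝔨, ∀ X Y : 𝔤,
      X ∈ (LieSubalgebra.toSubmodule 𝔨).orthogonalBilin B →
      Y ∈ (LieSubalgebra.toSubmodule 𝔨).orthogonalBilin B →
      B ⁅(V : 𝔤), X⁆ Y + B ⁅(V : 𝔤), Y⁆ X = ρ V * B X Y)
    -- 𝔤 is not perfect
    (hnp : ⁅(⊤ : LieIdeal ℝ 𝔤), (⊤ : LieIdeal ℝ 𝔤)⁆ ≠ ⊤) :
    -- 𝔨 is a Lie ideal of 𝔤
    ∀ X : 𝔤, ∀ V ∈ 𝔨, ⁅X, V⁆ ∈ 𝔨 := by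
  classical
  set K : Submodule ℝ 𝔤 := LieSubalgebra.toSubmodule 𝔨 with hKdef
  set M : Submodule ℝ 𝔤 := K.orthogonalBilin B with hMdef
  have hBrefl : B.IsRefl := fun x y h => by rw [hBsymm]; exact h
  have hB0 : ∀ x : 𝔤, B x x = 0 → x = 0 := by
    intro x hx; by_contra h; exact (hBpos x h).ne' hx
  have hKM : ∀ k ∈ K, ∀ m ∈ M, B k m = 0 := fun k hk m hm => hm k hk
  -- `K` and `M` are complementary
  have hnd : (B.restrict K).Nondegenerate := by
    refine ⟨?_, ?_⟩ <;> intro x hx <;>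
    · have h0 : B (x : 𝔤) (x : 𝔤) = 0 := by simpa using hx x
      exact Subtype.ext (hB0 _ h0)
  have horth : B.orthogonal K = M := rfl
  have hcompl : IsCompl K M := by
    rw [← horth]
    exact LinearMap.BilinForm.isCompl_orthogonal_of_restrict_nondegenerate hBrefl hnd
  -- the projection onto `M` along `K`
  set p : 𝔤 →ₗ[ℝ] 𝔤 := M.subtype ∘ₗ Submodule.projectionOnto M K hcompl.symm with hpdef
  have hpM : ∀ x : 𝔤, p x ∈ M := fun x => (Submodule.projectionOnto M K hcompl.symm x).2
  have hpid : ∀ x ∈ M, p x = x := by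
    intro x hx
    show ((Submodule.projectionOnto M K hcompl.symm x : M) : 𝔤) = x
    rw [show x = ((⟨x, hx⟩ : M) : 𝔤) from rfl, Submodule.projectionOnto_apply_left]
  have hpK : ∀ x ∈ K, p x = 0 := by
    intro x hx
    show ((Submodule.projectionOnto M K hcompl.symm x : M) : 𝔤) = 0
    rw [Submodule.projectionOnto_apply_of_mem_right _ hx]; rfl
  have hsub : ∀ x : 𝔤, x - p x ∈ K := by
    intro x
    have h := Submodule.projection_add_projection_eq_self hcompl x
    have h2 : ((K.projectionOnto M hcompl) x : 𝔤) = x - p x := eq_sub_of_add_eq h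
    rw [← h2]; exact Submodule.coe_mem _
  have hpz : ∀ z : 𝔤, ∀ Y ∈ M, B (p z) Y = B z Y := by
    intro z Y hY
    have h1 : B (z - p z) Y = 0 := hKM _ (hsub z) Y hY
    have h2 : B z Y = B (z - p z) Y + B (p z) Y := by
      rw [← LinearMap.add_apply, ← map_add, sub_add_cancel]
    rw [h2, h1, zero_add]
  have hlieK : ∀ (V : 𝔨) (k : 𝔤), k ∈ K → ⁅(V : 𝔤), k⁆ ∈ K := by
    intro V k hk
    exact 𝔨.lie_mem V.2 hk
  -- the (projected) adjoint action on `M`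
  set sfun : 𝔨 → (𝔤 →ₗ[ℝ] 𝔤) := fun V => p ∘ₗ (LieAlgebra.ad ℝ 𝔤 (V : 𝔤)) ∘ₗ p with hsdef
  have hs_apply : ∀ (V : 𝔨) (X : 𝔤), sfun V X = p ⁅(V : 𝔤), p X⁆ := fun V X => rfl
  have hsM : ∀ (V : 𝔨) (X : 𝔤), sfun V X ∈ M := fun V X => hpM _
  have hpp : ∀ z : 𝔤, p (p z) = p z := fun z => hpid _ (hpM z)
  have hsp : ∀ (V : 𝔨) (X : 𝔤), sfun V (p X) = sfun V X := by
    intro V X; rw [hs_apply, hs_apply, hpp]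
  have hpk0 : ∀ (V : 𝔨) (z : 𝔤), p ⁅(V : 𝔤), z⁆ = p ⁅(V : 𝔤), p z⁆ := by
    intro V z
    have h1 : ⁅(V : 𝔤), z⁆ = ⁅(V : 𝔤), z - p z⁆ + ⁅(V : 𝔤), p z⁆ := by
      rw [← lie_add, sub_add_cancel]
    rw [h1, map_add, hpK _ (hlieK V _ (hsub z)), zero_add]
  -- the conformality relation in terms of `sfun`
  have hscf : ∀ (V : 𝔨) (X Y : 𝔤), X ∈ M → Y ∈ M →
      B (sfun V X) Y + B (sfun V Y) X = ρ V * B X Y := by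
    intro V X Y hX hY
    rw [hs_apply, hs_apply, hpid X hX, hpid Y hY, hpz _ _ hY, hpz _ _ hX]
    exact hconf V X Y hX hY
  -- `sfun` is a representation of `𝔨`
  have hsbr : ∀ (V W : 𝔨) (X : 𝔤),
      sfun ⁅V, W⁆ X = sfun V (sfun W X) - sfun W (sfun V X) := by
    intro V W X
    have hco : ((⁅V, W⁆ : 𝔨) : 𝔤) = ⁅(V : 𝔤), (W : 𝔤)⁆ := rfl
    rw [hs_apply, hco, lie_lie, map_sub, hpk0 V ⁅(W : 𝔤), p X⁆, hpk0 W ⁅(V : 𝔤), p X⁆]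
    rw [hs_apply V (sfun W X), hs_apply W (sfun V X), hs_apply V X, hs_apply W X, hpp, hpp]
  -- a nonzero element of `M`
  have hx₀ : ∃ x₀ : 𝔤, x₀ ∈ M ∧ x₀ ≠ 0 := by
    by_contra h
    push_neg at h
    have hbot : M = ⊥ := (Submodule.eq_bot_iff M).mpr h
    rw [hbot] at hcodim
    simp at hcodim
  obtain ⟨x₀, hx₀M, hx₀⟩ := hx₀
  have hn : 0 < B x₀ x₀ := hBpos _ hx₀
  have hsx : ∀ V : 𝔨, 2 * B (sfun V x₀) x₀ = ρ V * B x₀ x₀ := by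
    intro V
    have := hscf V x₀ x₀ hx₀M hx₀M
    linarith
  -- the conformality functional vanishes on brackets
  have hρbr : ∀ a b : 𝔨, ρ ⁅a, b⁆ = 0 := by
    intro a b
    have h1 := hscf a (sfun b x₀) x₀ (hsM b x₀) hx₀M
    have h2 := hscf b (sfun a x₀) x₀ (hsM a x₀) hx₀M
    have h3 := hsx ⁅a, b⁆
    have h4 := hsx a
    have h5 := hsx b
    have h6 : B (sfun ⁅a, b⁆ x₀) x₀
        = B (sfun a (sfun b x₀)) x₀ - B (sfun b (sfun a x₀)) x₀ := by
      rw [hsbr, map_sub, LinearMap.sub_apply]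
    have hsymm := hBsymm (sfun a x₀) (sfun b x₀)
    have key : ρ ⁅a, b⁆ * B x₀ x₀ = 0 := by
      linear_combination (-1 : ℝ) * h3 + 2 * h6 + 2 * h1 - 2 * h2 + ρ a * h5 - ρ b * h4 - 2 * hsymm
    exact (mul_eq_zero.mp key).resolve_right (ne_of_gt hn)
  -- hence it vanishes identically, since `𝔨` is perfect
  have hρ : ∀ V : 𝔨, ρ V = 0 := by
    intro V
    have hVmem0 : V ∈ (⁅(⊤ : LieIdeal ℝ 𝔨), (⊤ : LieIdeal ℝ 𝔨)⁆ : LieIdeal ℝ 𝔨) := by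
      rw [aux_semisimple_perfect]; exact LieSubmodule.mem_top V
    have hVmem : V ∈ Submodule.span ℝ
        {m : 𝔨 | ∃ x ∈ (⊤ : LieIdeal ℝ 𝔨), ∃ n ∈ (⊤ : LieIdeal ℝ 𝔨), ⁅x, n⁆ = m} := by
      rw [← LieSubmodule.lieIdeal_oper_eq_linear_span']
      exact hVmem0
    refine Submodule.span_induction ?_ ?_ ?_ ?_ hVmem
    · rintro x ⟨u, -, v, -, rfl⟩; exact hρbr u v
    · exact map_zero ρ
    · intro x y _ _ hx hy; rw [map_add, hx, hy, add_zero]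
    · intro r x _ hx; rw [map_smul, hx, smul_zero]
  have hskew : ∀ (V : 𝔨) (X Y : 𝔤), X ∈ M → Y ∈ M →
      B (sfun V X) Y + B (sfun V Y) X = 0 := by
    intro V X Y hX hY
    have := hscf V X Y hX hY
    rw [hρ V, zero_mul] at this
    exact this
  -- the span of the image of `sfun`
  set W : Submodule ℝ 𝔤 := Submodule.span ℝ {z : 𝔤 | ∃ (V : 𝔨) (X : 𝔤), sfun V X = z} with hWdef
  have hWM : W ≤ M := Submodule.span_le.mpr (by rintro z ⟨V, X, rfl⟩; exact hsM V X)
  have hsW : ∀ (V : 𝔨) (X : 𝔤), sfun V X ∈ W := fun V X => Submodule.subset_span ⟨V, X, rfl⟩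
  have hKmem : ∀ x : 𝔤, x ∈ K ↔ x ∈ 𝔨 := fun x => Iff.rfl
  have hs0 : ∀ (V : 𝔨) (X : 𝔤), X ∈ M → sfun V X = 0 := by
    by_cases h3 : Module.finrank ℝ ↥W = 3
    · -- if `W` is all of `M`, then `𝔤` is perfect, a contradiction
      exfalso
      have hWM' : W = M := Submodule.eq_of_le_of_finrank_le hWM (by rw [h3, hcodim])
      have hKD : ∀ v ∈ 𝔨, v ∈ ⁅(⊤ : LieIdeal ℝ 𝔤), (⊤ : LieIdeal ℝ 𝔤)⁆ := by
        intro v hv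
        have hVmem0 : (⟨v, hv⟩ : 𝔨) ∈ (⁅(⊤ : LieIdeal ℝ 𝔨), (⊤ : LieIdeal ℝ 𝔨)⁆ : LieIdeal ℝ 𝔨) := by
          rw [aux_semisimple_perfect]; exact LieSubmodule.mem_top _
        have hVmem : (⟨v, hv⟩ : 𝔨) ∈ Submodule.span ℝ
            {m : 𝔨 | ∃ x ∈ (⊤ : LieIdeal ℝ 𝔨), ∃ n ∈ (⊤ : LieIdeal ℝ 𝔨), ⁅x, n⁆ = m} := by
          rw [← LieSubmodule.lieIdeal_oper_eq_linear_span']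
          exact hVmem0
        have : ((⟨v, hv⟩ : 𝔨) : 𝔤) ∈ ⁅(⊤ : LieIdeal ℝ 𝔤), (⊤ : LieIdeal ℝ 𝔤)⁆ := by
          refine Submodule.span_induction ?_ ?_ ?_ ?_ hVmem
          · rintro x ⟨a, -, b, -, rfl⟩
            rw [LieSubalgebra.coe_bracket]
            exact LieSubmodule.lie_mem_lie (LieSubmodule.mem_top _) (LieSubmodule.mem_top _)
          · simpa using zero_mem (⁅(⊤ : LieIdeal ℝ 𝔤), (⊤ : LieIdeal ℝ 𝔤)⁆ : LieIdeal ℝ 𝔤)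
          · intro x y _ _ hx hy
            rw [AddSubmonoid.coe_add]
            exact add_mem hx hy
          · intro r x _ hx
            rw [show ((r • x : 𝔨) : 𝔤) = r • (x : 𝔤) from rfl]
            exact (⁅(⊤ : LieIdeal ℝ 𝔤), (⊤ : LieIdeal ℝ 𝔤)⁆ : LieIdeal ℝ 𝔤).smul_mem' r hx
        exact this
      have hMD : ∀ m ∈ M, m ∈ ⁅(⊤ : LieIdeal ℝ 𝔤), (⊤ : LieIdeal ℝ 𝔤)⁆ := by
        intro m hm
        rw [← hWM'] at hm
        refine Submodule.span_induction ?_ ?_ ?_ ?_ hm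
        · rintro z ⟨V, X, rfl⟩
          have h1 : ⁅(V : 𝔤), p X⁆ ∈ ⁅(⊤ : LieIdeal ℝ 𝔤), (⊤ : LieIdeal ℝ 𝔤)⁆ :=
            LieSubmodule.lie_mem_lie (LieSubmodule.mem_top _) (LieSubmodule.mem_top _)
          have h2 : ⁅(V : 𝔤), p X⁆ - sfun V X ∈ K := hsub _
          have h4 : sfun V X = ⁅(V : 𝔤), p X⁆ - (⁅(V : 𝔤), p X⁆ - sfun V X) := by abel
          rw [h4]
          exact sub_mem h1 (hKD _ ((hKmem _).mp h2))
        · exact zero_mem _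
        · intro x y _ _ hx hy
          exact add_mem hx hy
        · intro r x _ hx
          exact (⁅(⊤ : LieIdeal ℝ 𝔤), (⊤ : LieIdeal ℝ 𝔤)⁆ : LieIdeal ℝ 𝔤).smul_mem' r hx
      apply hnp
      ext x
      simp only [LieSubmodule.mem_top, iff_true]
      have h7 : x = (x - p x) + p x := by abel
      rw [h7]
      exact add_mem (hKD _ ((hKmem _).mp (hsub x))) (hMD _ (hpM x))
    · -- otherwise `W` has dimension at most two
      have hWle : Module.finrank ℝ ↥W ≤ 3 := hcodim ▸ Submodule.finrank_mono hWM
      have hW2 : Module.finrank ℝ ↥W ≤ 2 := by omega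
      obtain b := Module.finBasis ℝ ↥W
      set e : Fin 2 → 𝔤 := fun i =>
        if h : (i : ℕ) < Module.finrank ℝ ↥W then ((b ⟨(i : ℕ), h⟩ : W) : 𝔤) else 0 with hedef
      have heM : ∀ i, e i ∈ M := by
        intro i
        rw [hedef]
        dsimp only
        split
        · exact hWM (Submodule.coe_mem _)
        · exact M.zero_mem
      have hWspan : W ≤ Submodule.span ℝ {e 0, e 1} := by
        intro w hw
        have h1 : (⟨w, hw⟩ : W) ∈ Submodule.span ℝ (Set.range b) := by
          rw [b.span_eq]; trivial
        have h2 : w ∈ Submodule.map W.subtype (Submodule.span ℝ (Set.range b)) :=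
          ⟨⟨w, hw⟩, h1, rfl⟩
        rw [Submodule.map_span] at h2
        refine Submodule.span_le.mpr ?_ h2
        rintro z ⟨_, ⟨i, rfl⟩, rfl⟩
        have hi : (i : ℕ) < 2 := lt_of_lt_of_le i.2 hW2
        have he : W.subtype (b i) = e ⟨(i : ℕ), hi⟩ := by
          show ((b i : W) : 𝔤) = e ⟨(i : ℕ), hi⟩
          rw [hedef]
          dsimp only
          rw [dif_pos i.2]
        rw [he]
        have hcases : (⟨(i : ℕ), hi⟩ : Fin 2) = 0 ∨ (⟨(i : ℕ), hi⟩ : Fin 2) = 1 := by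
          rcases (by omega : (i : ℕ) = 0 ∨ (i : ℕ) = 1) with h | h
          · left; exact Fin.ext h
          · right; exact Fin.ext h
        rcases hcases with h | h <;> rw [h]
        · exact Submodule.subset_span (Set.mem_insert _ _)
        · exact Submodule.subset_span (Set.mem_insert_of_mem _ rfl)
      -- key lemma: a skew operator with values in the span of `e 0, e 1`
      -- which pairs trivially with `(e 0, e 1)` vanishes on `M`
      have lemB : ∀ S : 𝔤 →ₗ[ℝ] 𝔤, (∀ X : 𝔤, S X ∈ M) →
          (∀ X : 𝔤, S X ∈ Submodule.span ℝ {e 0, e 1}) →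
          (∀ X Y : 𝔤, X ∈ M → Y ∈ M → B (S X) Y + B (S Y) X = 0) →
          B (S (e 0)) (e 1) = 0 → ∀ X ∈ M, S X = 0 := by
        intro S hSM hSsp hSk h12
        have h11 : B (S (e 0)) (e 0) = 0 := by
          have := hSk (e 0) (e 0) (heM 0) (heM 0); linarith
        have h22 : B (S (e 1)) (e 1) = 0 := by
          have := hSk (e 1) (e 1) (heM 1) (heM 1); linarith
        have h21 : B (S (e 1)) (e 0) = 0 := by
          have := hSk (e 1) (e 0) (heM 1) (heM 0); linarith
        have hval : ∀ z : 𝔤, z ∈ Submodule.span ℝ {e 0, e 1} →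
            B z (e 0) = 0 → B z (e 1) = 0 → z = 0 := by
          intro z hz hz0 hz1
          obtain ⟨a, c, hac⟩ := Submodule.mem_span_pair.mp hz
          apply hB0
          calc B z z = B z (a • e 0 + c • e 1) := by rw [hac]
            _ = a * B z (e 0) + c * B z (e 1) := by
                rw [map_add, map_smul, map_smul]; simp [smul_eq_mul]
            _ = 0 := by rw [hz0, hz1]; ring
        have hS0 : S (e 0) = 0 := hval _ (hSsp _) h11 h12
        have hS1 : S (e 1) = 0 := hval _ (hSsp _) h21 h22
        intro X hX
        obtain ⟨a, c, hac⟩ := Submodule.mem_span_pair.mp (hSsp X)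
        have hSSX : S (S X) = 0 := by
          rw [← hac, map_add, map_smul, map_smul, hS0, hS1, smul_zero, smul_zero, add_zero]
        apply hB0
        have hk := hSk X (S X) hX (hSM X)
        rw [hSSX, map_zero, LinearMap.zero_apply] at hk
        linarith [hBsymm (S X) (S X), hk]
      -- any two operators `sfun V` commute on `M`
      have hcomm : ∀ (V₁ V₂ : 𝔨) (X : 𝔤), X ∈ M →
          sfun V₁ (sfun V₂ X) = sfun V₂ (sfun V₁ X) := by
        intro V₁ V₂ X hX
        set c₁ : ℝ := B (sfun V₁ (e 0)) (e 1) with hc₁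
        set c₂ : ℝ := B (sfun V₂ (e 0)) (e 1) with hc₂
        by_cases hc₂0 : c₂ = 0
        · have h20 : ∀ Y ∈ M, sfun V₂ Y = 0 :=
            lemB (sfun V₂) (fun X => hsM V₂ X) (fun X => hWspan (hsW V₂ X))
              (fun X Y hX hY => hskew V₂ X Y hX hY) hc₂0
          rw [h20 X hX, map_zero, h20 _ (hsM V₁ X)]
        · have hS' : ∀ Y ∈ M, (c₂ • sfun V₁ - c₁ • sfun V₂) Y = 0 := by
            apply lemB
            · intro X
              simp only [LinearMap.sub_apply, LinearMap.smul_apply]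
              exact M.sub_mem (M.smul_mem _ (hsM V₁ X)) (M.smul_mem _ (hsM V₂ X))
            · intro X
              simp only [LinearMap.sub_apply, LinearMap.smul_apply]
              exact Submodule.sub_mem _
                (Submodule.smul_mem _ _ (hWspan (hsW V₁ X)))
                (Submodule.smul_mem _ _ (hWspan (hsW V₂ X)))
            · intro X Y hX hY
              have k1 := hskew V₁ X Y hX hY
              have k2 := hskew V₂ X Y hX hY
              simp only [LinearMap.sub_apply, LinearMap.smul_apply, map_sub, map_smul,
                LinearMap.sub_apply, LinearMap.smul_apply, smul_eq_mul]
              linear_combination c₂ * k1 - c₁ * k2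
            · simp only [LinearMap.sub_apply, LinearMap.smul_apply, map_sub, map_smul,
                LinearMap.smul_apply, smul_eq_mul]
              rw [← hc₁, ← hc₂]
              ring
          have hprop : ∀ Y ∈ M, sfun V₁ Y = (c₂⁻¹ * c₁) • sfun V₂ Y := by
            intro Y hY
            have h := hS' Y hY
            simp only [LinearMap.sub_apply, LinearMap.smul_apply] at h
            have h' : c₂ • sfun V₁ Y = c₁ • sfun V₂ Y := by
              rw [← sub_eq_zero]; exact h
            calc sfun V₁ Y = (c₂⁻¹ * c₂) • sfun V₁ Y := by
                  rw [inv_mul_cancel₀ hc₂0, one_smul]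
              _ = c₂⁻¹ • (c₂ • sfun V₁ Y) := by rw [smul_smul]
              _ = c₂⁻¹ • (c₁ • sfun V₂ Y) := by rw [h']
              _ = (c₂⁻¹ * c₁) • sfun V₂ Y := by rw [smul_smul]
          rw [hprop (sfun V₂ X) (hsM V₂ X), hprop X hX, map_smul]
      have hbr0 : ∀ (V₁ V₂ : 𝔨) (X : 𝔤), X ∈ M → sfun ⁅V₁, V₂⁆ X = 0 := by
        intro V₁ V₂ X hX
        rw [hsbr, hcomm V₁ V₂ X hX, sub_self]
      intro V X hX
      have hVmem0 : V ∈ (⁅(⊤ : LieIdeal ℝ 𝔨), (⊤ : LieIdeal ℝ 𝔨)⁆ : LieIdeal ℝ 𝔨) := by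
        rw [aux_semisimple_perfect]; exact LieSubmodule.mem_top V
      have hVmem : V ∈ Submodule.span ℝ
          {m : 𝔨 | ∃ x ∈ (⊤ : LieIdeal ℝ 𝔨), ∃ n ∈ (⊤ : LieIdeal ℝ 𝔨), ⁅x, n⁆ = m} := by
        rw [← LieSubmodule.lieIdeal_oper_eq_linear_span']
        exact hVmem0
      refine Submodule.span_induction ?_ ?_ ?_ ?_ hVmem
      · rintro U ⟨a, -, c, -, rfl⟩
        exact hbr0 a c X hX
      · show p ⁅((0 : 𝔨) : 𝔤), p X⁆ = 0
        rw [ZeroMemClass.coe_zero, zero_lie, map_zero]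
      · intro u v _ _ hu hv
        show p ⁅((u + v : 𝔨) : 𝔤), p X⁆ = 0
        rw [AddSubmonoid.coe_add, add_lie, map_add]
        rw [hs_apply] at hu hv
        rw [hu, hv, add_zero]
      · intro r u _ hu
        show p ⁅((r • u : 𝔨) : 𝔤), p X⁆ = 0
        rw [show ((r • u : 𝔨) : 𝔤) = r • (u : 𝔤) from rfl, smul_lie, map_smul]
        rw [hs_apply] at hu
        rw [hu, smul_zero]
  -- conclusion
  intro X V hV
  set V' : 𝔨 := ⟨V, hV⟩ with hV'def
  have h0 : sfun V' X = 0 := by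
    rw [← hsp V' X]; exact hs0 V' (p X) (hpM X)
  have h2 : ⁅(V : 𝔤), p X⁆ ∈ 𝔨 := by
    have h3 := hsub ⁅(V : 𝔤), p X⁆
    rw [hs_apply] at h0
    rw [show ((V' : 𝔤)) = V from rfl] at h0
    rw [h0, sub_zero] at h3
    exact (hKmem _).mp h3
  have h5 : ⁅p X, V⁆ ∈ 𝔨 := by
    rw [← lie_skew]
    exact neg_mem h2
  have h6 : ⁅X - p X, V⁆ ∈ 𝔨 := 𝔨.lie_mem ((hKmem _).mp (hsub X)) hV
  have h7 : ⁅X, V⁆ = ⁅X - p X, V⁆ + ⁅p X, V⁆ := by rw [← add_lie, sub_add_cancel]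
  rw [h7]
  exact add_mem h6 h5
end
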